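/- Let 𝔐 be a class of preference models and ★ a dynamic operator closed over 𝔐. The schemata (1) [★φ][≤]ξ → (φ → [≤](φ → [★φ]ξ)), (2) [★φ][<]ξ → (φ → [<](φ → [★φ]ξ)), (3) [≤][★φ]ξ → (φ → [★φ][≤](φ → ξ)), (4) [<][★φ]ξ → (φ → [★φ][<](φ → ξ)) are valid in ⟨𝔐, ★⟩ for all φ ∈ L_0 and ξ ∈ L_≤(★) if and only if ★ is 𝔐-DP1-compliant. -/

import Mathlib

inductive PForm (P : Type) : Type
  | atom : P → PForm P
  | neg  : PForm P → PForm P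
  | and  : PForm P → PForm P → PForm P

inductive DForm (P : Type) : Type
  | atom  : P → DForm P
  | neg   : DForm P → DForm P
  | and   : DForm P → DForm P → DForm P
  | all   : DForm P → DForm P
  | boxLe : DForm P → DForm P
  | boxLt : DForm P → DForm P
  | dyn   : PForm P → DForm P → DForm P

structure PrefModel (P : Type) where
  W : Type
  le : W → W → Prop
  refl : ∀ w, le w w
  trans : ∀ w₁ w₂ w₃, le w₁ w₂ → le w₂ w₃ → le w₁ w₃
  wf : WellFounded (fun w w' => le w w' ∧ ¬ le w' w)
  val : P → Set W

namespace PrefModel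
variable {P : Type}
def lt (M : PrefModel P) (w w' : M.W) : Prop := M.le w w' ∧ ¬ M.le w' w
def Min (M : PrefModel P) (S : Set M.W) : Set M.W :=
  {w | w ∈ S ∧ ¬ ∃ w' ∈ S, M.le w' w ∧ ¬ M.le w w'}
end PrefModel

def psat {P : Type} (M : PrefModel P) : PForm P → M.W → Prop
  | .atom p, w => w ∈ M.val p
  | .neg φ, w => ¬ psat M φ w
  | .and φ ψ, w => psat M φ w ∧ psat M ψ w

def pext {P : Type} (M : PrefModel P) (φ : PForm P) : Set M.W := {w | psat M φ w}

structure DynOp (P : Type) where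
  rel : (M : PrefModel P) → PForm P → M.W → M.W → Prop
  refl : ∀ M φ w, rel M φ w w
  trans : ∀ M φ w₁ w₂ w₃, rel M φ w₁ w₂ → rel M φ w₂ w₃ → rel M φ w₁ w₃
  wf : ∀ M φ, WellFounded (fun w w' => rel M φ w w' ∧ ¬ rel M φ w' w)

def DynOp.apply {P : Type} (s : DynOp P) (M : PrefModel P) (φ : PForm P) : PrefModel P where
  W := M.W
  le := s.rel M φ
  refl := s.refl M φ
  trans := s.trans M φ
  wf := s.wf M φ
  val := M.val

def DynOp.srel {P : Type} (s : DynOp P) (M : PrefModel P) (φ : PForm P) (w w' : M.W) : Prop :=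
  s.rel M φ w w' ∧ ¬ s.rel M φ w' w

def PForm.toD {P : Type} : PForm P → DForm P
  | .atom p => .atom p
  | .neg φ => .neg φ.toD
  | .and φ ψ => .and φ.toD ψ.toD

namespace DForm
variable {P : Type}
def imp (ξ ψ : DForm P) : DForm P := .neg (.and ξ (.neg ψ))
def iff (ξ ψ : DForm P) : DForm P := .and (imp ξ ψ) (imp ψ ξ)
def or (ξ ψ : DForm P) : DForm P := .neg (.and (.neg ξ) (.neg ψ))
def exi (ξ : DForm P) : DForm P := .neg (.all (.neg ξ))
def diaLt (ξ : DForm P) : DForm P := .neg (.boxLt (.neg ξ))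
def mu (ξ : DForm P) : DForm P := .and ξ (.neg (diaLt ξ))
def bel (ψ χ : DForm P) : DForm P := .all (imp (mu χ) ψ)
end DForm

def dsat {P : Type} (s : DynOp P) : DForm P → (M : PrefModel P) → M.W → Prop
  | .atom p, M, w => w ∈ M.val p
  | .neg ξ, M, w => ¬ dsat s ξ M w
  | .and ξ₁ ξ₂, M, w => dsat s ξ₁ M w ∧ dsat s ξ₂ M w
  | .all ξ, M, _ => ∀ w', dsat s ξ M w'
  | .boxLe ξ, M, w => ∀ w', M.le w' w → dsat s ξ M w'
  | .boxLt ξ, M, w => ∀ w', M.lt w' w → dsat s ξ M w'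
  | .dyn φ ξ, M, w => dsat s ξ (s.apply M φ) w

def ClosedOver {P : Type} (s : DynOp P) (𝔐 : Set (PrefModel P)) : Prop :=
  ∀ M ∈ 𝔐, ∀ φ : PForm P, s.apply M φ ∈ 𝔐

/-- `★` is `𝔐`-DP1-compliant. -/
def DP1Compliant {P : Type} (s : DynOp P) (𝔐 : Set (PrefModel P)) : Prop :=
  ∀ M ∈ 𝔐, ∀ (φ : PForm P) (w w' : M.W), psat M φ w → psat M φ w' →
    -- (DP1a), non-strict and strict versions
    ((s.rel M φ w w' → ∀ ξ : DForm P, dsat s (.dyn φ ξ) M w →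
        ∃ w'' : M.W, psat M φ w'' ∧ dsat s (.dyn φ ξ) M w'' ∧ M.le w'' w') ∧
     (s.srel M φ w w' → ∀ ξ : DForm P, dsat s (.dyn φ ξ) M w →
        ∃ w'' : M.W, psat M φ w'' ∧ dsat s (.dyn φ ξ) M w'' ∧ M.lt w'' w') ∧
    -- (DP1b), non-strict and strict versions
     (M.le w w' → ∀ ξ : DForm P, dsat s (.dyn φ ξ) M w →
        ∃ w'' : M.W, psat M φ w'' ∧ dsat s (.dyn φ ξ) M w'' ∧ s.rel M φ w'' w') ∧
     (M.lt w w' → ∀ ξ : DForm P, dsat s (.dyn φ ξ) M w →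
        ∃ w'' : M.W, psat M φ w'' ∧ dsat s (.dyn φ ξ) M w'' ∧ s.srel M φ w'' w'))


section Aux
variable {P : Type}

lemma psat_apply (s : DynOp P) (M : PrefModel P) (φ ψ : PForm P) (w : M.W) :
    psat (s.apply M φ) ψ w ↔ psat M ψ w := by
  induction ψ with
  | atom p => exact Iff.rfl
  | neg χ ih => simp [psat, ih]
  | and χ₁ χ₂ ih1 ih2 => simp [psat, ih1, ih2]

lemma dsat_toD (s : DynOp P) (ψ : PForm P) (M : PrefModel P) (w : M.W) :
    dsat s ψ.toD M w ↔ psat M ψ w := by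
  induction ψ generalizing M w with
  | atom p => exact Iff.rfl
  | neg χ ih => simp [PForm.toD, dsat, psat, ih]
  | and χ₁ χ₂ ih1 ih2 => simp [PForm.toD, dsat, psat, ih1, ih2]

lemma dsat_imp (s : DynOp P) (a b : DForm P) (M : PrefModel P) (w : M.W) :
    dsat s (a.imp b) M w ↔ (dsat s a M w → dsat s b M w) := by
  simp [DForm.imp, dsat]

lemma apply_le (s : DynOp P) (M : PrefModel P) (φ : PForm P) (w w' : M.W) :
    (s.apply M φ).le w w' ↔ s.rel M φ w w' := Iff.rfl

lemma apply_lt (s : DynOp P) (M : PrefModel P) (φ : PForm P) (w w' : M.W) :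
    (s.apply M φ).lt w w' ↔ s.srel M φ w w' := Iff.rfl

end Aux

theorem dp1_compliance_characterisation {P : Type}
    (𝔐 : Set (PrefModel P)) (s : DynOp P) (hclosed : ClosedOver s 𝔐) :
    (∀ (φ : PForm P) (ξ : DForm P), ∀ M ∈ 𝔐, ∀ w : M.W,
      dsat s ((DForm.dyn φ (.boxLe ξ)).imp
        (φ.toD.imp (.boxLe (φ.toD.imp (.dyn φ ξ))))) M w ∧
      dsat s ((DForm.dyn φ (.boxLt ξ)).imp
        (φ.toD.imp (.boxLt (φ.toD.imp (.dyn φ ξ))))) M w ∧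
      dsat s ((DForm.boxLe (.dyn φ ξ)).imp
        (φ.toD.imp (.dyn φ (.boxLe (φ.toD.imp ξ))))) M w ∧
      dsat s ((DForm.boxLt (.dyn φ ξ)).imp
        (φ.toD.imp (.dyn φ (.boxLt (φ.toD.imp ξ))))) M w) ↔ DP1Compliant s 𝔐 := by
  constructor
  · -- validity of the schemata implies DP1-compliance
    intro h M hM φ w w' hw hw'
    refine ⟨?_, ?_, ?_, ?_⟩
    · -- DP1a, non-strict: uses schema (3)
      intro hrel ξ hξ
      by_contra hno
      push_neg at hno
      have hs := (h φ (DForm.imp φ.toD (.neg ξ)) M hM w').2.2.1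
      rw [dsat_imp, dsat_imp] at hs
      have hprem : dsat s (.boxLe (.dyn φ (DForm.imp φ.toD (.neg ξ)))) M w' := by
        intro u hu
        show dsat s (DForm.imp φ.toD (.neg ξ)) (s.apply M φ) u
        erw [dsat_imp]
        intro hu2
        erw [dsat_toD, psat_apply] at hu2
        exact fun hd => hno u hu2 hd hu
      have := hs hprem ((dsat_toD s φ M w').mpr hw') w hrel
      erw [dsat_imp, dsat_toD, psat_apply] at this
      have h3 := this hw
      erw [dsat_imp, dsat_toD, psat_apply] at h3
      exact h3 hw hξ
    · -- DP1a, strict: uses schema (4)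
      intro hrel ξ hξ
      by_contra hno
      push_neg at hno
      have hs := (h φ (DForm.imp φ.toD (.neg ξ)) M hM w').2.2.2
      rw [dsat_imp, dsat_imp] at hs
      have hprem : dsat s (.boxLt (.dyn φ (DForm.imp φ.toD (.neg ξ)))) M w' := by
        intro u hu
        show dsat s (DForm.imp φ.toD (.neg ξ)) (s.apply M φ) u
        erw [dsat_imp]
        intro hu2
        erw [dsat_toD, psat_apply] at hu2
        exact fun hd => hno u hu2 hd hu
      have := hs hprem ((dsat_toD s φ M w').mpr hw') w hrel
      erw [dsat_imp, dsat_toD, psat_apply] at this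
      have h3 := this hw
      erw [dsat_imp, dsat_toD, psat_apply] at h3
      exact h3 hw hξ
    · -- DP1b, non-strict: uses schema (1)
      intro hle ξ hξ
      by_contra hno
      push_neg at hno
      have hs := (h φ (DForm.imp φ.toD (.neg ξ)) M hM w').1
      rw [dsat_imp, dsat_imp] at hs
      have hprem : dsat s (.dyn φ (.boxLe (DForm.imp φ.toD (.neg ξ)))) M w' := by
        intro u hu
        rw [dsat_imp]
        intro hu2
        erw [dsat_toD, psat_apply] at hu2
        exact fun hd => hno u hu2 hd hu
      have := hs hprem ((dsat_toD s φ M w').mpr hw') w hle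
      rw [dsat_imp, dsat_toD] at this
      have h2 := this hw
      erw [show dsat s (.dyn φ (DForm.imp φ.toD (.neg ξ))) M w =
        dsat s (DForm.imp φ.toD (.neg ξ)) (s.apply M φ) w from rfl, dsat_imp,
        dsat_toD, psat_apply] at h2
      exact h2 hw hξ
    · -- DP1b, strict: uses schema (2)
      intro hlt ξ hξ
      by_contra hno
      push_neg at hno
      have hs := (h φ (DForm.imp φ.toD (.neg ξ)) M hM w').2.1
      rw [dsat_imp, dsat_imp] at hs
      have hprem : dsat s (.dyn φ (.boxLt (DForm.imp φ.toD (.neg ξ)))) M w' := by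
        intro u hu
        rw [dsat_imp]
        intro hu2
        erw [dsat_toD, psat_apply] at hu2
        exact fun hd => hno u hu2 hd hu
      have := hs hprem ((dsat_toD s φ M w').mpr hw') w hlt
      rw [dsat_imp, dsat_toD] at this
      have h2 := this hw
      erw [show dsat s (.dyn φ (DForm.imp φ.toD (.neg ξ))) M w =
        dsat s (DForm.imp φ.toD (.neg ξ)) (s.apply M φ) w from rfl, dsat_imp,
        dsat_toD, psat_apply] at h2
      exact h2 hw hξ
  · -- DP1-compliance implies validity of the schemata
    intro hc φ ξ M hM w
    refine ⟨?_, ?_, ?_, ?_⟩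
    · rw [dsat_imp, dsat_imp]
      intro h1 h2
      intro u hu
      rw [dsat_imp, dsat_toD]
      intro h3
      rw [dsat_toD] at h2
      by_contra hne
      obtain ⟨w'', hw''φ, hw''ξ, hw''r⟩ :=
        (hc M hM φ u w h3 h2).2.2.1 hu (.neg ξ) hne
      exact hw''ξ (h1 w'' hw''r)
    · rw [dsat_imp, dsat_imp]
      intro h1 h2
      intro u hu
      rw [dsat_imp, dsat_toD]
      intro h3
      rw [dsat_toD] at h2
      by_contra hne
      obtain ⟨w'', hw''φ, hw''ξ, hw''r⟩ :=
        (hc M hM φ u w h3 h2).2.2.2 hu (.neg ξ) hne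
      exact hw''ξ (h1 w'' hw''r)
    · rw [dsat_imp, dsat_imp]
      intro h1 h2
      intro u hu
      erw [show dsat s (DForm.imp φ.toD ξ) (s.apply M φ) u ↔
        (dsat s φ.toD (s.apply M φ) u → dsat s ξ (s.apply M φ) u) from dsat_imp ..,
        dsat_toD, psat_apply]
      intro h3
      rw [dsat_toD] at h2
      by_contra hne
      obtain ⟨w'', hw''φ, hw''ξ, hw''r⟩ :=
        (hc M hM φ u w h3 h2).1 hu (.neg ξ) hne
      exact hw''ξ (h1 w'' hw''r)
    · rw [dsat_imp, dsat_imp]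
      intro h1 h2
      intro u hu
      erw [show dsat s (DForm.imp φ.toD ξ) (s.apply M φ) u ↔
        (dsat s φ.toD (s.apply M φ) u → dsat s ξ (s.apply M φ) u) from dsat_imp ..,
        dsat_toD, psat_apply]
      intro h3
      rw [dsat_toD] at h2
      by_contra hne
      obtain ⟨w'', hw''φ, hw''ξ, hw''r⟩ :=
        (hc M hM φ u w h3 h2).2.1 hu (.neg ξ) hne
      exact hw''ξ (h1 w'' hw''r)
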